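/- Suppose real-valued functions f_k on [0,1] (k in a finite index set B) have dense and pairwise disjoint sets of discontinuity points P_k. If continuous functions a_k : [0,1] → ℝ and a continuous c : [0,1] → ℝ satisfy Σ_k a_k(t) f_k(t) = c(t) for all t ∈ [0,1], then a_k ≡ 0 for each k and c ≡ 0. -/
import Mathlib


open Set

/-- If the `f k` are bounded on `[0,1]` with dense, pairwise disjoint sets of
discontinuity points, and continuous functions `a k`, `c` satisfy
`∑ k, a k t * f k t = c t` on `[0,1]`, then all `a k` and `c` vanish on `[0,1]`. -/
theorem stmt5 {ι : Type*} [Fintype ι]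
    (f : ι → ℝ → ℝ) (a : ι → ℝ → ℝ) (c : ℝ → ℝ)
    (hbdd : ∀ k, ∃ M : ℝ, ∀ t ∈ Set.Icc (0 : ℝ) 1, |f k t| ≤ M)
    (hdense : ∀ k, Set.Icc (0 : ℝ) 1 ⊆
      closure {t | t ∈ Set.Icc (0 : ℝ) 1 ∧ ¬ ContinuousWithinAt (f k) (Set.Icc 0 1) t})
    (hdisj : ∀ k k', k ≠ k' →
      Disjoint {t | t ∈ Set.Icc (0 : ℝ) 1 ∧ ¬ ContinuousWithinAt (f k) (Set.Icc 0 1) t}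
        {t | t ∈ Set.Icc (0 : ℝ) 1 ∧ ¬ ContinuousWithinAt (f k') (Set.Icc 0 1) t})
    (ha : ∀ k, ContinuousOn (a k) (Set.Icc 0 1))
    (hc : ContinuousOn c (Set.Icc 0 1))
    (heq : ∀ t ∈ Set.Icc (0 : ℝ) 1, ∑ k, a k t * f k t = c t) :
    (∀ k, ∀ t ∈ Set.Icc (0 : ℝ) 1, a k t = 0) ∧ (∀ t ∈ Set.Icc (0 : ℝ) 1, c t = 0) := by
  classical
  have key : ∀ k, ∀ t ∈ Set.Icc (0 : ℝ) 1, a k t = 0 := by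
    intro k
    by_contra h
    push_neg at h
    obtain ⟨t₀, ht₀, hne⟩ := h
    set P : Set ℝ := {t | t ∈ Set.Icc (0 : ℝ) 1 ∧
      ¬ ContinuousWithinAt (f k) (Set.Icc 0 1) t} with hP
    have hPsub : P ⊆ Set.Icc (0 : ℝ) 1 := fun x hx => hx.1
    have hcw : ContinuousWithinAt (a k) (Set.Icc 0 1) t₀ :=
      (ha k).continuousWithinAt ht₀
    have hev : (a k) ⁻¹' ({0}ᶜ) ∈ nhdsWithin t₀ (Set.Icc 0 1) :=
      hcw (compl_singleton_mem_nhds hne)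
    have hclos : t₀ ∈ closure P := hdense k ht₀
    have hnb : (nhdsWithin t₀ P).NeBot := mem_closure_iff_nhdsWithin_neBot.mp hclos
    have hev' : (a k) ⁻¹' ({0}ᶜ) ∈ nhdsWithin t₀ P :=
      nhdsWithin_mono t₀ hPsub hev
    obtain ⟨p, hpa, hpP⟩ :=
      Filter.nonempty_of_mem (Filter.inter_mem hev' self_mem_nhdsWithin)
    obtain ⟨hpI, hpD⟩ := hpP
    have hap : a k p ≠ 0 := hpa
    -- every other f k' is continuous within Icc at p
    have hck' : ∀ k' ∈ Finset.univ.erase k,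
        ContinuousWithinAt (f k') (Set.Icc 0 1) p := by
      intro k' hk'
      have hkk' : k ≠ k' := (Finset.ne_of_mem_erase hk').symm
      have := Set.disjoint_left.mp (hdisj k k' hkk') ⟨hpI, hpD⟩
      by_contra hcon
      exact this ⟨hpI, hcon⟩
    -- a k * f k is continuous within Icc at p
    have hG : ContinuousWithinAt (fun t => a k t * f k t) (Set.Icc 0 1) p := by
      have hR : ContinuousWithinAt
          (fun t => c t - ∑ k' ∈ Finset.univ.erase k, a k' t * f k' t)
          (Set.Icc 0 1) p := by
        apply (hc.continuousWithinAt hpI).sub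
        exact tendsto_finset_sum _ fun k' hk' =>
          ((ha k').continuousWithinAt hpI).mul (hck' k' hk')
      apply hR.congr
      · intro t ht
        have := heq t ht
        rw [← Finset.add_sum_erase _ _ (Finset.mem_univ k)] at this
        linarith
      · have := heq p hpI
        rw [← Finset.add_sum_erase _ _ (Finset.mem_univ k)] at this
        linarith
    -- hence f k is continuous within Icc at p: contradiction
    have hcap : ContinuousWithinAt (a k) (Set.Icc 0 1) p :=
      (ha k).continuousWithinAt hpI
    have hdiv : ContinuousWithinAt (fun t => (a k t * f k t) / a k t)
        (Set.Icc 0 1) p := hG.div hcap hap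
    have hevp : ∀ᶠ t in nhdsWithin p (Set.Icc 0 1),
        f k t = (a k t * f k t) / a k t := by
      filter_upwards [hcap (compl_singleton_mem_nhds hap)] with t ht
      exact (mul_div_cancel_left₀ _ ht).symm
    exact hpD (hdiv.congr_of_eventuallyEq hevp
      (by rw [mul_div_cancel_left₀ _ hap]))
  refine ⟨key, fun t ht => ?_⟩
  have := heq t ht
  rw [← this]
  apply Finset.sum_eq_zero
  intro k _
  rw [key k t ht, zero_mul]
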